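/- Let V be a finite set, G : 2^V → ℝ a submodular set function, β ∈ (0,1], and H : 2^V → ℝ a normalized, non-decreasing, β-weakly DR-supermodular set function (i.e., H(B ∪ {i}) − H(B) ≥ β·(H(A ∪ {i}) − H(A)) for all A ⊆ B ⊆ V and i ∈ V ∖ B). Set F = G − H. Let ε ≥ 0, let X̂ ⊆ V be an ε-strong local minimum of F, and let X* be a minimizer of F over 2^V. Then F(X̂) ≤ G(X*) − β·H(X*) + 2ε. -/

import Mathlib

lemma stmt17_aux {V : Type*} [DecidableEq V]
    (H : Finset V → ℝ) (β : ℝ)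
    (hHdr : ∀ A B : Finset V, A ⊆ B → ∀ i ∉ B,
      β * (H (insert i A) - H A) ≤ H (insert i B) - H B) :
    ∀ D A B : Finset V, A ⊆ B → Disjoint D B →
      β * (H (A ∪ D) - H A) ≤ H (B ∪ D) - H B := by
  intro D
  induction D using Finset.induction_on with
  | empty => intro A B _ _; simp
  | insert i D hi ih =>
    intro A B hAB hdisj
    have hdisj' : Disjoint D B := (Finset.disjoint_insert_left.mp hdisj).2
    have hiB : i ∉ B ∪ D := by
      simp [Finset.mem_union, (Finset.disjoint_insert_left.mp hdisj).1, hi,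
        fun h => (Finset.disjoint_insert_left.mp hdisj).1 h]
    have h1 := ih A B hAB hdisj'
    have h2 := hHdr (A ∪ D) (B ∪ D) (Finset.union_subset_union_left hAB) i hiB
    have e1 : A ∪ insert i D = insert i (A ∪ D) := by
      ext x; simp [Finset.mem_union, Finset.mem_insert]
    have e2 : B ∪ insert i D = insert i (B ∪ D) := by
      ext x; simp [Finset.mem_union, Finset.mem_insert]
    rw [e1, e2]
    nlinarith [h1, h2]

/-- Let `G` be submodular, `H` normalized non-decreasing β-weakly
DR-supermodular with `β ∈ (0,1]`, and `F = G − H`. If `X̂` is an ε-strong local minimum of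
`F` and `X*` minimizes `F`, then `F(X̂) ≤ G(X*) − β H(X*) + 2ε`. -/
theorem stmt17 {V : Type*} [Fintype V] [DecidableEq V]
    (G H : Finset V → ℝ) (β : ℝ) (hβ0 : 0 < β) (hβ1 : β ≤ 1)
    (hGsub : ∀ A B : Finset V, G (A ∪ B) + G (A ∩ B) ≤ G A + G B)
    (hH0 : H ∅ = 0)
    (hHmono : ∀ A B : Finset V, A ⊆ B → H A ≤ H B)
    (hHdr : ∀ A B : Finset V, A ⊆ B → ∀ i ∉ B,
      β * (H (insert i A) - H A) ≤ H (insert i B) - H B)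
    (ε : ℝ) (hε : 0 ≤ ε) (Xhat : Finset V)
    (hloc₁ : ∀ Y ⊆ Xhat, G Xhat - H Xhat ≤ (G Y - H Y) + ε)
    (hloc₂ : ∀ Y : Finset V, Xhat ⊆ Y → G Xhat - H Xhat ≤ (G Y - H Y) + ε)
    (Xstar : Finset V) (hXstar : ∀ X : Finset V, G Xstar - H Xstar ≤ G X - H X) :
    G Xhat - H Xhat ≤ G Xstar - β * H Xstar + 2 * ε := by
  set A := Xhat ∩ Xstar with hA
  have hsum : β * (H Xstar - H A) ≤ H (Xhat ∪ Xstar) - H Xhat := by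
    have := stmt17_aux H β hHdr (Xstar \ Xhat) A Xhat Finset.inter_subset_left
      (Finset.sdiff_disjoint)
    have e1 : A ∪ (Xstar \ Xhat) = Xstar := by
      ext x; simp [hA, Finset.mem_union, Finset.mem_inter, Finset.mem_sdiff]; tauto
    have e2 : Xhat ∪ (Xstar \ Xhat) = Xhat ∪ Xstar := by
      ext x; simp [Finset.mem_union, Finset.mem_sdiff]
    rwa [e1, e2] at this
  have hG := hGsub Xhat Xstar
  have h1 := hloc₂ (Xhat ∪ Xstar) Finset.subset_union_left
  have h2 := hloc₁ A Finset.inter_subset_left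
  have hHApos : 0 ≤ H A := by rw [← hH0]; exact hHmono ∅ A (Finset.empty_subset _)
  nlinarith [mul_le_of_le_one_left hHApos hβ1]
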